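/- arXiv:2408.15215 — 6 statements merged into one kernel-verified Lean document; each statement's English description precedes it below -/
import Mathlib

section
/- For every integer Δ ≥ 3, the equation x·γ_{Δ-1}(x) = γ_Δ(x) has a unique solution α_Δ in the interval (1, ∞), where γ_Δ(x) = Σ_{k=0}^{Δ-1} x^k/k!. -/
/-- `gam Δ x = ∑_{k=0}^{Δ-1} x^k / k!` -/
noncomputable def gam (Δ : ℕ) (x : ℝ) : ℝ :=
  ∑ k ∈ Finset.range Δ, x ^ k / (Nat.factorial k)

lemma hasDerivAt_gam (n : ℕ) (x : ℝ) : HasDerivAt (gam (n+1)) (gam n x) x := by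
  have h : HasDerivAt (gam (n+1))
      (∑ k ∈ Finset.range (n+1), (k : ℝ) * x ^ (k-1) / (Nat.factorial k)) x := by
    unfold gam
    apply HasDerivAt.fun_sum
    intro k hk
    simpa [div_eq_mul_inv, mul_comm, mul_assoc] using
      ((hasDerivAt_pow k x).div_const (Nat.factorial k))
  convert h using 1
  rw [Finset.sum_range_succ']
  unfold gam
  simp only [Nat.cast_zero, zero_mul, zero_div, add_zero]
  apply Finset.sum_congr rfl
  intro i _
  have : (Nat.factorial (i+1) : ℝ) = (i+1) * Nat.factorial i := by
    push_cast [Nat.factorial_succ]; ring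
  rw [this]
  have h1 : ((i:ℝ)+1) ≠ 0 := by positivity
  have h2 : (Nat.factorial i : ℝ) ≠ 0 := by positivity
  field_simp
  simp only [Nat.add_sub_cancel, Nat.add_sub_cancel_left]; push_cast; ring

lemma gam_cont (n : ℕ) : Continuous (gam n) := by
  unfold gam; fun_prop

lemma gam_pos (n : ℕ) (hn : 0 < n) (x : ℝ) (hx : 0 < x) : 0 < gam n x := by
  unfold gam
  apply Finset.sum_pos
  · intro k _; positivity
  · exact Finset.nonempty_range_iff.mpr (by omega)

lemma gam_ge_term (n : ℕ) (x : ℝ) (hx : 0 ≤ x) : x ^ n / Nat.factorial n ≤ gam (n+1) x := by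
  unfold gam
  apply Finset.single_le_sum (f := fun k => x ^ k / (Nat.factorial k : ℝ))
  · intro k _; positivity
  · simp

/-- For every integer `Δ ≥ 3`, the equation `x * γ_{Δ-1}(x) = γ_Δ(x)` has a unique
solution in `(1, ∞)`. -/
theorem unique_alpha (Δ : ℕ) (hΔ : 3 ≤ Δ) :
    ∃! x : ℝ, x ∈ Set.Ioi (1 : ℝ) ∧ x * gam (Δ - 1) x = gam Δ x := by
  obtain ⟨n, rfl⟩ : ∃ n, Δ = n + 2 := ⟨Δ - 2, by omega⟩
  have hn : 1 ≤ n := by omega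
  have hΔ1 : n + 2 - 1 = n + 1 := by omega
  rw [hΔ1]
  set F : ℝ → ℝ := fun x => x * gam (n+1) x - gam (n+2) x with hF
  have hderiv : ∀ x : ℝ, HasDerivAt F (x * gam n x) x := by
    intro x
    have h1 := ((hasDerivAt_id x).mul (hasDerivAt_gam n x)).sub (hasDerivAt_gam (n+1) x)
    refine h1.congr_deriv ?_
    simp only [id, one_mul]; ring
  have hcont : Continuous F := by
    exact (continuous_id.mul (gam_cont (n+1))).sub (gam_cont (n+2))
  have hmono : StrictMonoOn F (Set.Ici 1) := by
    apply strictMonoOn_of_deriv_pos (convex_Ici 1) hcont.continuousOn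
    intro x hx
    rw [interior_Ici] at hx
    rw [(hderiv x).deriv]
    have hx1 : (1:ℝ) < x := hx
    have := gam_pos n hn x (by linarith)
    positivity
  have hsplit : ∀ x : ℝ, gam (n+2) x = gam (n+1) x + x ^ (n+1) / Nat.factorial (n+1) := by
    intro x; unfold gam; rw [Finset.sum_range_succ]
  have hF1 : F 1 < 0 := by
    simp only [hF, hsplit 1, one_mul]
    have : (0:ℝ) < 1 ^ (n+1) / Nat.factorial (n+1) := by positivity
    linarith
  have hF3 : 0 < F 3 := by
    have h1 : (3:ℝ) ^ n / Nat.factorial n ≤ gam (n+1) 3 := gam_ge_term n 3 (by norm_num)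
    have h2 : F 3 = 2 * gam (n+1) 3 - 3 ^ (n+1) / Nat.factorial (n+1) := by
      simp only [hF, hsplit 3]; ring
    have hfac : (Nat.factorial (n+1) : ℝ) = (n+1) * Nat.factorial n := by
      push_cast [Nat.factorial_succ]; ring
    have hfn : (0:ℝ) < Nat.factorial n := by positivity
    have hn1 : (2:ℝ) ≤ (n:ℝ) + 1 := by exact_mod_cast by omega
    have h3 : (0:ℝ) < 3 ^ n := by positivity
    have key : (3:ℝ) ^ (n+1) / Nat.factorial (n+1) < 2 * (3 ^ n / Nat.factorial n) := by
      rw [hfac, pow_succ, div_lt_iff₀ (by positivity)]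
      have hc : 2 * ((3:ℝ) ^ n / Nat.factorial n) * (((n:ℝ) + 1) * Nat.factorial n)
          = 2 * ((n:ℝ)+1) * 3 ^ n := by field_simp
      rw [hc]
      nlinarith
    rw [h2]
    linarith [key, h1]
  have h13 : (1:ℝ) ≤ 3 := by norm_num
  obtain ⟨x, hx, hFx⟩ := intermediate_value_Ioo h13 hcont.continuousOn
    (show (0:ℝ) ∈ Set.Ioo (F 1) (F 3) from ⟨hF1, hF3⟩)
  refine ⟨x, ⟨hx.1, by have : F x = 0 := hFx; simp only [hF] at this; linarith⟩, ?_⟩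
  rintro y ⟨hy, hyeq⟩
  have hFy : F y = 0 := by simp only [hF]; linarith
  exact hmono.injOn (Set.mem_Ici.mpr (le_of_lt hy)) (Set.mem_Ici.mpr (le_of_lt hx.1))
    (by rw [hFy, hFx])
end

section
/- For every integer Δ ≥ 3, the value α_Δ satisfies 1 < α_Δ < (Δ−1)/(Δ−2); in particular α_Δ ≤ 2 and α_Δ → 1 as Δ → ∞. -/
lemma key (m : ℕ) (x : ℝ) (hx : 1 < x)
    (heq : x * gam (m + 2) x = gam (m + 3) x) :
    x < ((m : ℝ) + 2) / ((m : ℝ) + 1) := by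
  by_contra h
  push_neg at h
  have hm1 : (0:ℝ) < (m:ℝ) + 1 := by positivity
  have h' : ((m:ℝ) + 1) * (x - 1) ≥ 1 := by
    rw [div_le_iff₀ hm1] at h; nlinarith
  have hsum3 : gam (m + 3) x = gam (m + 2) x + x ^ (m + 2) / ((m + 2).factorial : ℝ) := by
    simp [gam, Finset.sum_range_succ]
  have hsum2 : gam (m + 2) x = gam m x + x ^ m / (m.factorial : ℝ)
      + x ^ (m + 1) / ((m + 1).factorial : ℝ) := by
    simp [gam, Finset.sum_range_succ]
  have hx0 : (0:ℝ) < x := lt_trans one_pos hx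
  have hg0 : 0 ≤ gam m x := by
    apply Finset.sum_nonneg
    intro k _
    positivity
  rw [hsum3] at heq
  have hkey : (x - 1) * gam (m + 2) x = x ^ (m + 2) / ((m + 2).factorial : ℝ) := by
    linear_combination heq
  have hF : (0:ℝ) < (m.factorial : ℝ) := by positivity
  have hf1 : ((m + 1).factorial : ℝ) = ((m:ℝ) + 1) * (m.factorial : ℝ) := by
    push_cast [Nat.factorial_succ]; ring
  have hf2 : ((m + 2).factorial : ℝ) = ((m:ℝ) + 2) * ((m:ℝ) + 1) * (m.factorial : ℝ) := by
    push_cast [Nat.factorial_succ]; ring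
  have hlow : gam (m + 2) x ≥ x ^ m / (m.factorial : ℝ) + x ^ (m + 1) / ((m + 1).factorial : ℝ) := by
    rw [hsum2]; linarith
  have hle : (x - 1) * (x ^ m / (m.factorial : ℝ) + x ^ (m + 1) / ((m + 1).factorial : ℝ))
      ≤ x ^ (m + 2) / ((m + 2).factorial : ℝ) := by
    rw [← hkey]
    have : 0 < x - 1 := by linarith
    nlinarith [hlow]
  rw [hf1, hf2] at hle
  have hp1 : x ^ (m + 1) = x ^ m * x := pow_succ x m
  have hp2 : x ^ (m + 2) = x ^ m * x ^ 2 := by ring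
  rw [hp1, hp2] at hle
  have ha : (0:ℝ) < x ^ m := pow_pos hx0 m
  have h2 : (0:ℝ) < ((m:ℝ) + 2) * ((m:ℝ) + 1) * (m.factorial : ℝ) := by positivity
  have key3 : ((x - 1) * (((m:ℝ) + 2) * ((m:ℝ) + 1) + ((m:ℝ) + 2) * x)) * x ^ m
      ≤ x ^ 2 * x ^ m := by
    have h4 := mul_le_mul_of_nonneg_right hle h2.le
    have e1 : (x - 1) * (x ^ m / (m.factorial:ℝ) + x ^ m * x / (((m:ℝ) + 1) * (m.factorial:ℝ)))
        * (((m:ℝ) + 2) * ((m:ℝ) + 1) * (m.factorial:ℝ))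
        = ((x - 1) * (((m:ℝ) + 2) * ((m:ℝ) + 1) + ((m:ℝ) + 2) * x)) * x ^ m := by
      field_simp
    have e2 : x ^ m * x ^ 2 / (((m:ℝ) + 2) * ((m:ℝ) + 1) * (m.factorial:ℝ))
        * (((m:ℝ) + 2) * ((m:ℝ) + 1) * (m.factorial:ℝ)) = x ^ 2 * x ^ m := by
      field_simp
    rw [e1, e2] at h4; exact h4
  have hle2 : (x - 1) * (((m:ℝ) + 2) * ((m:ℝ) + 1) + ((m:ℝ) + 2) * x) ≤ x ^ 2 :=
    le_of_mul_le_mul_right key3 ha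
  nlinarith [hle2, h', mul_nonneg (Nat.cast_nonneg m : (0:ℝ) ≤ (m:ℝ)) hx0.le,
    mul_nonneg (by positivity : (0:ℝ) ≤ (m:ℝ) + 1) (sq_nonneg (x - 1)), hx]

/-- For every integer `Δ ≥ 3`, the solution `α_Δ ∈ (1,∞)` of `x·γ_{Δ-1}(x) = γ_Δ(x)`
satisfies `1 < α_Δ < (Δ−1)/(Δ−2)`; in particular `α_Δ ≤ 2` and `α_Δ → 1` as `Δ → ∞`. -/
theorem alpha_bounds (α : ℕ → ℝ)
    (hα : ∀ Δ : ℕ, 3 ≤ Δ → α Δ ∈ Set.Ioi (1 : ℝ) ∧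
      α Δ * gam (Δ - 1) (α Δ) = gam Δ (α Δ)) :
    (∀ Δ : ℕ, 3 ≤ Δ →
      1 < α Δ ∧ α Δ < ((Δ : ℝ) - 1) / ((Δ : ℝ) - 2) ∧ α Δ ≤ 2) ∧
    Filter.Tendsto α Filter.atTop (nhds 1) := by
  have main : ∀ Δ : ℕ, 3 ≤ Δ →
      1 < α Δ ∧ α Δ < ((Δ : ℝ) - 1) / ((Δ : ℝ) - 2) ∧ α Δ ≤ 2 := by
    intro Δ hΔ
    obtain ⟨h1, h2⟩ := hα Δ hΔ
    obtain ⟨m, rfl⟩ : ∃ m, Δ = m + 3 := ⟨Δ - 3, by omega⟩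
    have h2' : α (m + 3) * gam (m + 2) (α (m + 3)) = gam (m + 3) (α (m + 3)) := by
      simpa using h2
    have hk := key m _ h1 h2'
    have c1 : ((m + 3 : ℕ) : ℝ) - 1 = (m : ℝ) + 2 := by push_cast; ring
    have c2 : ((m + 3 : ℕ) : ℝ) - 2 = (m : ℝ) + 1 := by push_cast; ring
    refine ⟨h1, by rw [c1, c2]; exact hk, ?_⟩
    have h2le : ((m : ℝ) + 2) / ((m : ℝ) + 1) ≤ 2 := by
      rw [div_le_iff₀ (by positivity)]; nlinarith [Nat.cast_nonneg (α := ℝ) m]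
    linarith
  refine ⟨main, ?_⟩
  have hb : Filter.Tendsto (fun Δ : ℕ => ((Δ : ℝ) - 1) / ((Δ : ℝ) - 2))
      Filter.atTop (nhds 1) := by
    have ht : Filter.Tendsto (fun Δ : ℕ => ((Δ : ℝ) - 2)) Filter.atTop Filter.atTop := by
      have := Filter.tendsto_atTop_add_const_right Filter.atTop (-2)
        (tendsto_natCast_atTop_atTop (R := ℝ))
      simpa [sub_eq_add_neg] using this
    have h0 : Filter.Tendsto (fun Δ : ℕ => 1 / ((Δ : ℝ) - 2)) Filter.atTop (nhds 0) := by
      simpa [one_div, Function.comp_def] using tendsto_inv_atTop_zero.comp ht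
    have h1 : Filter.Tendsto (fun Δ : ℕ => 1 + 1 / ((Δ : ℝ) - 2)) Filter.atTop (nhds 1) := by
      simpa using tendsto_const_nhds.add h0
    apply h1.congr'
    filter_upwards [Filter.eventually_ge_atTop 3] with Δ h
    have hΔ2 : ((Δ : ℝ) - 2) ≠ 0 := by
      have : (3 : ℝ) ≤ (Δ : ℝ) := by exact_mod_cast h
      intro hc; nlinarith
    field_simp
    ring
  apply tendsto_of_tendsto_of_tendsto_of_le_of_le' tendsto_const_nhds hb
  · filter_upwards [Filter.eventually_ge_atTop 3] with Δ h
    exact (main Δ h).1.le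
  · filter_upwards [Filter.eventually_ge_atTop 3] with Δ h
    exact (main Δ h).2.1.le
end

section
/- The sequence a_Δ = γ_{Δ-1}(α_Δ) (Δ ≥ 3) converges to e as Δ → ∞. -/
lemma gam_one_tendsto : Filter.Tendsto (fun n : ℕ => gam n 1) Filter.atTop
    (nhds (Real.exp 1)) := by
  have h := (NormedSpace.expSeries_div_hasSum_exp (1 : ℝ)).tendsto_sum_nat
  rw [Real.exp_eq_exp_ℝ]
  simpa [gam] using h

lemma alpha_upper {Δ : ℕ} {x : ℝ} (hΔ : 3 ≤ Δ) (hx : 1 < x)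
    (heq : x * gam (Δ - 1) x = gam Δ x) :
    x ≤ ((Δ : ℝ) - 1) / ((Δ : ℝ) - 2) := by
  obtain ⟨n, rfl⟩ : ∃ n, Δ = n + 3 := ⟨Δ - 3, by omega⟩
  have hx0 : (0:ℝ) < x := by linarith
  -- gam (n+3) x = gam (n+2) x + x^(n+2)/(n+2)!
  have hsplit : gam (n + 3) x = gam (n + 2) x + x ^ (n + 2) / (Nat.factorial (n + 2)) := by
    simp [gam, Finset.sum_range_succ]
  have h1 : n + 3 - 1 = n + 2 := rfl
  rw [h1, hsplit] at heq
  have hkey : (x - 1) * gam (n + 2) x = x ^ (n + 2) / (Nat.factorial (n + 2)) := by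
    rw [sub_mul, one_mul]; linarith
  have hlb : x ^ (n + 1) / (Nat.factorial (n + 1)) ≤ gam (n + 2) x := by
    unfold gam
    apply Finset.single_le_sum (f := fun k => x ^ k / (Nat.factorial k))
    · intro i _
      positivity
    · simp
  have hfac : (Nat.factorial (n + 2) : ℝ) = (n + 2) * Nat.factorial (n + 1) := by
    push_cast [Nat.factorial_succ]; ring
  have hfp : (0:ℝ) < Nat.factorial (n + 1) := by positivity
  have hxp : (0:ℝ) < x ^ (n + 1) := by positivity
  -- (x-1) * x^(n+1)/(n+1)! ≤ x^(n+2)/((n+2)*(n+1)!)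
  have h2 : ((x - 1) * x ^ (n + 1)) / (Nat.factorial (n + 1)) ≤
      (x ^ (n + 1) * x) / (((n:ℝ) + 2) * (Nat.factorial (n + 1))) := by
    rw [← pow_succ, ← hfac, ← hkey, mul_div_assoc]
    exact mul_le_mul_of_nonneg_left hlb (by linarith)
  have hn2 : (0:ℝ) < (n:ℝ) + 2 := by positivity
  rw [div_le_div_iff₀ hfp (by positivity)] at h2
  -- simplify: (x-1) ≤ x/(n+2)
  have h3 : (x - 1) * ((n:ℝ) + 2) ≤ x := by
    nlinarith [mul_pos hxp hfp, h2, hxp, hfp]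
  have hc1 : ((n:ℝ) + 3) - 1 = (n:ℝ) + 2 := by ring
  have hc2 : ((n:ℝ) + 3) - 2 = (n:ℝ) + 1 := by ring
  push_cast
  rw [hc1, hc2, le_div_iff₀ (by positivity)]
  nlinarith

/-- The sequence `a_Δ = γ_{Δ-1}(α_Δ)` converges to `e` as `Δ → ∞`, where `α_Δ ∈ (1,∞)`
solves `x·γ_{Δ-1}(x) = γ_Δ(x)`. -/
theorem a_Delta_tendsto_e (α : ℕ → ℝ)
    (hα : ∀ Δ : ℕ, 3 ≤ Δ → α Δ ∈ Set.Ioi (1 : ℝ) ∧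
      α Δ * gam (Δ - 1) (α Δ) = gam Δ (α Δ)) :
    Filter.Tendsto (fun Δ : ℕ => gam (Δ - 1) (α Δ)) Filter.atTop
      (nhds (Real.exp 1)) := by
  have hlow : Filter.Tendsto (fun Δ : ℕ => gam (Δ - 1) 1) Filter.atTop (nhds (Real.exp 1)) :=
    gam_one_tendsto.comp (Filter.tendsto_sub_atTop_nat 1)
  have hratio : Filter.Tendsto (fun Δ : ℕ => ((Δ : ℝ) - 1) / ((Δ : ℝ) - 2))
      Filter.atTop (nhds 1) := by
    have h1 : Filter.Tendsto (fun Δ : ℕ => ((Δ : ℝ) - 2)) Filter.atTop Filter.atTop :=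
      Filter.tendsto_atTop_add_const_right _ (-2) tendsto_natCast_atTop_atTop
    have h2' : Filter.Tendsto (fun Δ : ℕ => 1 + ((Δ : ℝ) - 2)⁻¹) Filter.atTop (nhds 1) := by
      simpa using Filter.Tendsto.const_add (1:ℝ) (tendsto_inv_atTop_zero.comp h1)
    apply h2'.congr'
    filter_upwards [Filter.eventually_atTop.2 ⟨3, fun Δ hΔ => hΔ⟩] with Δ hΔ
    have : ((Δ : ℝ) - 2) ≠ 0 := by
      have : (3:ℝ) ≤ Δ := by exact_mod_cast hΔ
      linarith
    field_simp
    ring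
  have hhigh : Filter.Tendsto (fun Δ : ℕ => Real.exp (((Δ : ℝ) - 1) / ((Δ : ℝ) - 2)))
      Filter.atTop (nhds (Real.exp 1)) := (Real.continuous_exp.tendsto 1).comp hratio
  refine tendsto_of_tendsto_of_tendsto_of_le_of_le' hlow hhigh ?_ ?_
  · filter_upwards [Filter.eventually_atTop.2 ⟨3, fun Δ hΔ => hΔ⟩] with Δ hΔ
    obtain ⟨hx1, _⟩ := hα Δ hΔ
    have hx1 : 1 < α Δ := hx1
    unfold gam
    apply Finset.sum_le_sum
    intro i _
    gcongr <;> linarith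
  · filter_upwards [Filter.eventually_atTop.2 ⟨3, fun Δ hΔ => hΔ⟩] with Δ hΔ
    obtain ⟨hx1, heq⟩ := hα Δ hΔ
    have hx1 : 1 < α Δ := hx1
    calc gam (Δ - 1) (α Δ) ≤ Real.exp (α Δ) :=
          Real.sum_le_exp_of_nonneg (by linarith) _
      _ ≤ Real.exp (((Δ : ℝ) - 1) / ((Δ : ℝ) - 2)) :=
          Real.exp_le_exp.2 (alpha_upper hΔ hx1 heq)
end

section
/- Let T be a tree on [n] with maximum degree at most Δ that contains as an induced subgraph a forest F with m non-empty components and ℓ total vertices (ℓ ≤ n). Then m ≤ 1 + (n−ℓ)(Δ−1). -/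
open SimpleGraph Finset

variable {V : Type*}

lemma my_induce_supp_connected (G : SimpleGraph V) (c : G.ConnectedComponent) :
    (G.induce c.supp).Connected := by
  classical
  induction c using SimpleGraph.ConnectedComponent.ind with
  | _ u =>
  apply G.induce_connected_of_patches u (by simp [ConnectedComponent.mem_supp_iff])
  intro v hv
  rw [ConnectedComponent.mem_supp_iff, ConnectedComponent.eq] at hv
  obtain ⟨p⟩ := hv.symm
  refine ⟨{w | w ∈ p.support}, ?_, p.start_mem_support, p.end_mem_support, ?_⟩
  · intro w hw
    simp only [Set.mem_setOf_eq] at hw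
    rw [ConnectedComponent.mem_supp_iff]
    exact (ConnectedComponent.eq.mpr ⟨p.takeUntil w hw⟩).symm
  · exact (p.connected_induce_support).preconnected _ _

lemma my_isAcyclic_induce {G : SimpleGraph V} (h : G.IsAcyclic) (s : Set V) :
    (G.induce s).IsAcyclic := by
  intro v c hc
  exact h (c.map (Embedding.induce (G := G) s).toHom) (hc.map (Embedding.induce (G := G) s).injective)

lemma my_card_induce_edgeFinset [Fintype V] [DecidableEq V] (G : SimpleGraph V)
    [DecidableRel G.Adj] (s : Set V) [DecidablePred (· ∈ s)] :
    (G.induce s).edgeFinset.card =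
      ((G.edgeFinset).filter (fun e => ∀ v ∈ e, v ∈ s)).card := by
  classical
  apply Finset.card_bij (fun e _ => Sym2.map Subtype.val e)
  · intro e he
    induction e with
    | _ a b =>
      simp only [mem_edgeFinset, mem_edgeSet, comap_adj, Function.Embedding.coe_subtype] at he
      simp only [Sym2.map_pair_eq, mem_filter, mem_edgeFinset, mem_edgeSet]
      refine ⟨he, ?_⟩
      intro v hv
      rcases Sym2.mem_iff.mp hv with rfl | rfl
      · exact a.2
      · exact b.2
  · intro e₁ _ e₂ _ h
    exact Sym2.map.injective Subtype.val_injective h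
  · intro e he
    simp only [mem_filter, mem_edgeFinset, mem_edgeSet] at he
    induction e with
    | _ a b =>
      obtain ⟨hadj, hmem⟩ := he
      have ha : a ∈ s := hmem a (Sym2.mem_mk_left a b)
      have hb : b ∈ s := hmem b (Sym2.mem_mk_right a b)
      refine ⟨s(⟨a, ha⟩, ⟨b, hb⟩), ?_, ?_⟩
      · simpa [mem_edgeFinset, mem_edgeSet] using hadj
      · simp

lemma my_acyclic_card [Fintype V] (G : SimpleGraph V) [Fintype G.edgeSet] (h : G.IsAcyclic) :
    Nat.card G.ConnectedComponent + G.edgeFinset.card = Fintype.card V := by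
  classical
  have htree : ∀ c : G.ConnectedComponent, (G.induce c.supp).IsTree :=
    fun c => ⟨my_induce_supp_connected G c, my_isAcyclic_induce h _⟩
  have hvert : Fintype.card V
      = ∑ c : G.ConnectedComponent, (univ.filter fun v => G.connectedComponentMk v = c).card := by
    rw [← Finset.card_univ]
    exact Finset.card_eq_sum_card_fiberwise (fun v _ => mem_univ _)
  have hfib : ∀ c : G.ConnectedComponent,
      (univ.filter fun v => G.connectedComponentMk v = c).card = Fintype.card c.supp := by
    intro c
    rw [← Set.toFinset_card]
    congr 1
    ext v
    simp [ConnectedComponent.mem_supp_iff]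
  have hedge : G.edgeFinset.card
      = ∑ c : G.ConnectedComponent,
        ((G.edgeFinset).filter fun e => G.connectedComponentMk e.out.1 = c).card :=
    Finset.card_eq_sum_card_fiberwise (fun e _ => mem_univ _)
  have hfibe : ∀ c : G.ConnectedComponent,
      ((G.edgeFinset).filter fun e => G.connectedComponentMk e.out.1 = c).card
        = (G.induce c.supp).edgeFinset.card := by
    intro c
    rw [my_card_induce_edgeFinset]
    congr 1
    ext e
    simp only [mem_filter, and_congr_right_iff, mem_edgeFinset]
    intro he
    obtain ⟨y, hy⟩ := Sym2.mem_iff_exists.mp (Sym2.out_fst_mem e)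
    have hadj : G.Adj e.out.1 y := by rwa [hy, mem_edgeSet] at he
    constructor
    · intro hc v hv
      rw [hy, Sym2.mem_iff] at hv
      rcases hv with rfl | rfl
      · exact ConnectedComponent.mem_supp_iff _ _ |>.mpr hc
      · rw [ConnectedComponent.mem_supp_iff, ← hc]
        exact ConnectedComponent.eq.mpr hadj.symm.reachable
    · intro hall
      exact (ConnectedComponent.mem_supp_iff _ _).mp (hall _ (Sym2.out_fst_mem e))
  have hcomp : ∀ c : G.ConnectedComponent,
      Fintype.card c.supp = (G.induce c.supp).edgeFinset.card + 1 :=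
    fun c => ((htree c).card_edgeFinset).symm
  rw [Nat.card_eq_fintype_card]
  have h1 : G.edgeFinset.card = ∑ c : G.ConnectedComponent, (G.induce c.supp).edgeFinset.card :=
    hedge.trans (Finset.sum_congr rfl fun c _ => hfibe c)
  have h2 : Fintype.card V = ∑ c : G.ConnectedComponent,
      ((G.induce c.supp).edgeFinset.card + 1) :=
    hvert.trans (Finset.sum_congr rfl fun c _ => (hfib c).trans (hcomp c))
  rw [h1, h2, Finset.sum_add_distrib, Finset.sum_const, Finset.card_univ, smul_eq_mul, mul_one]
  omega

/-- If a tree `T` on `[n]` with maximum degree at most `Δ` contains as an induced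
subgraph a forest `F` with vertex set `A` of size `ℓ` and `m` connected components,
then `m ≤ 1 + (n−ℓ)(Δ−1)`. -/
theorem components_bound (n Δ ℓ m : ℕ) (hΔ : 3 ≤ Δ)
    (T F : SimpleGraph (Fin n)) (A : Set (Fin n))
    (hT : T.IsTree) (hdeg : ∀ v, (T.neighborSet v).ncard ≤ Δ)
    (hF : F.IsAcyclic) (hsupp : F.support ⊆ A) (hA : A.ncard = ℓ)
    (hind : ∀ u ∈ A, ∀ v ∈ A, (T.Adj u v ↔ F.Adj u v))
    (hm : Nat.card (F.induce A).ConnectedComponent = m) :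
    m ≤ 1 + (n - ℓ) * (Δ - 1) := by
  classical
  -- card of A
  have hcardA : Fintype.card ↥A = ℓ := by
    rw [← Set.toFinset_card, ← Set.ncard_eq_toFinset_card', hA]
  have hℓn : ℓ ≤ n := by
    rw [← hcardA]
    simpa using Fintype.card_le_of_injective (fun a : ↥A => (a : Fin n)) Subtype.val_injective
  -- forest formula on F.induce A
  have hforest := my_acyclic_card (F.induce A) (my_isAcyclic_induce hF A)
  rw [hm, hcardA] at hforest
  -- edges of F.induce A = edges of T inside A
  have h3 : (F.induce A).edgeFinset.card
      = ((T.edgeFinset).filter (fun e => ∀ v ∈ e, v ∈ A)).card := by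
    rw [my_card_induce_edgeFinset F A]
    congr 1
    ext e
    induction e with
    | _ a b =>
      simp only [mem_filter, mem_edgeFinset, mem_edgeSet, Sym2.mem_iff]
      constructor
      · rintro ⟨hadj, hP⟩
        have ha : a ∈ A := hP a (Or.inl rfl)
        have hb : b ∈ A := hP b (Or.inr rfl)
        exact ⟨(hind a ha b hb).mpr hadj, hP⟩
      · rintro ⟨hadj, hP⟩
        have ha : a ∈ A := hP a (Or.inl rfl)
        have hb : b ∈ A := hP b (Or.inr rfl)
        exact ⟨(hind a ha b hb).mp hadj, hP⟩
  rw [h3] at hforest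
  -- tree edge count
  have htreeE : T.edgeFinset.card + 1 = n := by
    simpa using hT.card_edgeFinset
  -- split edges
  have hsplit := Finset.card_filter_add_card_filter_not
    (s := T.edgeFinset) (p := fun e => ∀ v ∈ e, v ∈ A)
  -- bound edges touching the complement
  set B : Finset (Fin n) := (A.toFinset)ᶜ with hBdef
  have hBcard : B.card = n - ℓ := by
    rw [hBdef, Finset.card_compl, Set.toFinset_card, hcardA]
    simp
  have hsub : (T.edgeFinset).filter (fun e => ¬ ∀ v ∈ e, v ∈ A)
      ⊆ B.biUnion (fun v => T.incidenceFinset v) := by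
    intro e he
    simp only [mem_filter, not_forall] at he
    obtain ⟨heE, w, hw, hwA⟩ := he
    rw [mem_biUnion]
    refine ⟨w, ?_, ?_⟩
    · simp [hBdef, hwA]
    · rw [mem_incidenceFinset]
      exact ⟨mem_edgeFinset.mp heE, hw⟩
  have hdeg' : ∀ v, T.degree v ≤ Δ := by
    intro v
    have : (T.neighborSet v).ncard = T.degree v := by
      rw [Set.ncard_eq_toFinset_card']
      simp [SimpleGraph.degree, SimpleGraph.neighborFinset]
    rw [← this]
    exact hdeg v
  have hbound : ((T.edgeFinset).filter (fun e => ¬ ∀ v ∈ e, v ∈ A)).card ≤ (n - ℓ) * Δ := by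
    calc ((T.edgeFinset).filter (fun e => ¬ ∀ v ∈ e, v ∈ A)).card
        ≤ (B.biUnion (fun v => T.incidenceFinset v)).card := Finset.card_le_card hsub
      _ ≤ ∑ v ∈ B, (T.incidenceFinset v).card := Finset.card_biUnion_le
      _ ≤ ∑ v ∈ B, Δ := Finset.sum_le_sum (fun v _ => by
            rw [card_incidenceFinset_eq_degree]; exact hdeg' v)
      _ = (n - ℓ) * Δ := by rw [Finset.sum_const, smul_eq_mul, hBcard]
  -- arithmetic
  have hmul : (n - ℓ) * Δ = (n - ℓ) * (Δ - 1) + (n - ℓ) := by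
    have h1 : Δ - 1 + 1 = Δ := by omega
    calc (n - ℓ) * Δ = (n - ℓ) * ((Δ - 1) + 1) := by rw [h1]
      _ = (n - ℓ) * (Δ - 1) + (n - ℓ) := by ring
  rw [hmul] at hbound
  set y := (n - ℓ) * (Δ - 1) with hy
  omega
end

section
/- For positive reals y_1, y_2, y_3, define ρ(x) = (y_1 y_2^x / x^{y_3})^x on (0,∞). Then for any 0 < a ≤ b, max_{a ≤ x ≤ b} ρ(x) ≤ max{ exp((y_3/2)·y_1^{1/y_3}), ρ(a), ρ(b) }. -/
private lemma rho_eq_exp (y₁ y₂ y₃ : ℝ) (hy₁ : 0 < y₁) (hy₂ : 0 < y₂) (x : ℝ) (hx : 0 < x) :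
    (y₁ * y₂ ^ x / x ^ y₃) ^ x
      = Real.exp (x * Real.log y₁ + x^2 * Real.log y₂ - y₃ * (x * Real.log x)) := by
  have hb : 0 < y₁ * y₂ ^ x / x ^ y₃ := by positivity
  rw [Real.rpow_def_of_pos hb]
  congr 1
  rw [Real.log_div (by positivity) (by positivity), Real.log_mul (ne_of_gt hy₁) (by positivity),
    Real.log_rpow hy₂, Real.log_rpow hx]
  ring

private lemma hasDerivF (y₁ y₂ y₃ : ℝ) (x : ℝ) (hx : x ≠ 0) :
    HasDerivAt (fun t => t * Real.log y₁ + t^2 * Real.log y₂ - y₃ * (t * Real.log t))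
      (Real.log y₁ + 2*x*Real.log y₂ - y₃ * (Real.log x + 1)) x := by
  have h1 : HasDerivAt (fun t : ℝ => t * Real.log y₁) (1 * Real.log y₁) x :=
    (hasDerivAt_id x).mul_const _
  have h2 : HasDerivAt (fun t : ℝ => t^2 * Real.log y₂) ((2 * x ^ 1) * Real.log y₂) x :=
    (hasDerivAt_pow 2 x).mul_const _
  have h3 : HasDerivAt (fun t : ℝ => y₃ * (t * Real.log t)) (y₃ * (Real.log x + 1)) x :=
    (Real.hasDerivAt_mul_log hx).const_mul _
  refine ((h1.add h2).sub h3).congr_deriv ?_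
  ring

private lemma key_ineq (A c : ℝ) (hc : 0 < c) : c * (A + 1 - Real.log c) ≤ Real.exp A := by
  set u : ℝ := c * Real.exp (-A) with hu
  have hup : 0 < u := by positivity
  have hlog : Real.log u = Real.log c - A := by
    rw [hu, Real.log_mul (ne_of_gt hc) (Real.exp_ne_zero _), Real.log_exp]; ring
  have h1 : Real.log (1/u) ≤ 1/u - 1 := Real.log_le_sub_one_of_pos (by positivity)
  rw [Real.log_div one_ne_zero (ne_of_gt hup), Real.log_one] at h1
  -- so: -log u ≤ 1/u - 1, i.e. u - u*log u ≤ 1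
  have h2 : u * (1 - Real.log u) ≤ 1 := by
    have := mul_le_mul_of_nonneg_left h1 hup.le
    have h3 : u * (1/u - 1) = 1 - u := by field_simp
    nlinarith
  have hc' : c = Real.exp A * u := by
    rw [hu]; rw [mul_comm c, ← mul_assoc, ← Real.exp_add]; simp
  calc c * (A + 1 - Real.log c) = Real.exp A * (u * (1 - Real.log u)) := by
        rw [hlog]; linear_combination (A + 1 - Real.log c) * hc'
    _ ≤ Real.exp A * 1 := by
        exact mul_le_mul_of_nonneg_left h2 (Real.exp_pos A).le
    _ = Real.exp A := mul_one _

/-- For positive reals `y₁, y₂, y₃` and `ρ(x) = (y₁·y₂^x / x^{y₃})^x` on `(0,∞)`: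
for any `0 < a ≤ b`, the maximum of `ρ` on `[a,b]` is at most
`max{exp((y₃/2)·y₁^{1/y₃}), ρ(a), ρ(b)}`. -/
theorem rho_max_bound (y₁ y₂ y₃ : ℝ) (hy₁ : 0 < y₁) (hy₂ : 0 < y₂) (hy₃ : 0 < y₃)
    (a b : ℝ) (ha : 0 < a) (hab : a ≤ b) (x : ℝ) (hx : x ∈ Set.Icc a b) :
    (y₁ * y₂ ^ x / x ^ y₃) ^ x
      ≤ max (Real.exp ((y₃ / 2) * y₁ ^ (1 / y₃)))
          (max ((y₁ * y₂ ^ a / a ^ y₃) ^ a) ((y₁ * y₂ ^ b / b ^ y₃) ^ b)) := by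
  set F : ℝ → ℝ := fun t => t * Real.log y₁ + t^2 * Real.log y₂ - y₃ * (t * Real.log t) with hF
  have hb : 0 < b := lt_of_lt_of_le ha hab
  have hxpos : 0 < x := lt_of_lt_of_le ha hx.1
  have hcont : ContinuousOn F (Set.Icc a b) := fun t ht =>
    (hasDerivF y₁ y₂ y₃ t (ne_of_gt (lt_of_lt_of_le ha ht.1))).continuousAt.continuousWithinAt
  obtain ⟨c, hc, hmax⟩ := isCompact_Icc.exists_isMaxOn (Set.nonempty_Icc.mpr hab) hcont
  have hcpos : 0 < c := lt_of_lt_of_le ha hc.1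
  have hFx : F x ≤ F c := hmax hx
  rw [rho_eq_exp y₁ y₂ y₃ hy₁ hy₂ x hxpos]
  rcases eq_or_ne c a with rfl | hca
  · refine le_trans ?_ (le_max_of_le_right (le_max_left _ _))
    rw [rho_eq_exp y₁ y₂ y₃ hy₁ hy₂ c hcpos]
    exact Real.exp_le_exp.mpr hFx
  rcases eq_or_ne c b with rfl | hcb
  · refine le_trans ?_ (le_max_of_le_right (le_max_right _ _))
    rw [rho_eq_exp y₁ y₂ y₃ hy₁ hy₂ c hcpos]
    exact Real.exp_le_exp.mpr hFx
  · -- interior critical point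
    have hac : a < c := lt_of_le_of_ne hc.1 (Ne.symm hca)
    have hcb' : c < b := lt_of_le_of_ne hc.2 hcb
    have hnhds : Set.Icc a b ∈ nhds c := Icc_mem_nhds hac hcb'
    have hloc : IsLocalMax F c := hmax.isLocalMax hnhds
    have hd := hasDerivF y₁ y₂ y₃ c (ne_of_gt hcpos)
    have hderiv0 : Real.log y₁ + 2*c*Real.log y₂ - y₃ * (Real.log c + 1) = 0 := by
      have := hloc.deriv_eq_zero
      rwa [hd.deriv] at this
    -- F c = (y₃ c / 2) * (log y₁ / y₃ + 1 - log c)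
    have hFc : F c = (y₃ / 2) * (c * (Real.log y₁ / y₃ + 1 - Real.log c)) := by
      have hc2 : c^2 * Real.log y₂ = c * (y₃ * (Real.log c + 1) - Real.log y₁) / 2 := by
        nlinarith [hderiv0]
      rw [hF]
      field_simp
      nlinarith [hc2]
    have hkey : c * (Real.log y₁ / y₃ + 1 - Real.log c) ≤ Real.exp (Real.log y₁ / y₃) :=
      key_ineq (Real.log y₁ / y₃) c hcpos
    have hexp : Real.exp (Real.log y₁ / y₃) = y₁ ^ (1 / y₃) := by
      rw [Real.rpow_def_of_pos hy₁]; ring_nf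
    have hFc_le : F c ≤ (y₃ / 2) * y₁ ^ (1 / y₃) := by
      rw [hFc, ← hexp]
      exact mul_le_mul_of_nonneg_left hkey (by positivity)
    refine le_trans ?_ (le_max_left _ _)
    exact Real.exp_le_exp.mpr (le_trans hFx hFc_le)
end

section
/- For every integer Δ ≥ 4 and every r ≥ 0, the quantity ψ(r) := γ_{Δ-1}(r)·γ_Δ(r) + r·γ_{Δ-2}(r)·γ_Δ(r) − r·(γ_{Δ-1}(r))² satisfies ψ(r) ≥ (γ_{Δ-2}(r))² ≥ 1, provided 0 ≤ r ≤ 2. -/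
lemma gam_succ (n : ℕ) (x : ℝ) :
    gam (n + 1) x = gam n x + x ^ n / (Nat.factorial n) := by
  simp [gam, Finset.sum_range_succ]

lemma gam_one_le (n : ℕ) (hn : 1 ≤ n) (x : ℝ) (hx : 0 ≤ x) : 1 ≤ gam n x := by
  induction n with
  | zero => omega
  | succ m ih =>
    rcases Nat.eq_zero_or_pos m with h | h
    · simp [h, gam]
    · rw [gam_succ]
      have := ih h
      have : (0:ℝ) ≤ x ^ m / (Nat.factorial m) :=
        div_nonneg (pow_nonneg hx m) (by positivity)
      linarith [ih h]

/-- For every `Δ ≥ 4` and `0 ≤ r ≤ 2`, the quantity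
`ψ(r) = γ_{Δ-1}(r)·γ_Δ(r) + r·γ_{Δ-2}(r)·γ_Δ(r) − r·(γ_{Δ-1}(r))²`
satisfies `ψ(r) ≥ (γ_{Δ-2}(r))² ≥ 1`. -/
theorem psi_lower_bound (Δ : ℕ) (hΔ : 4 ≤ Δ) (r : ℝ) (hr0 : 0 ≤ r) (hr2 : r ≤ 2) :
    (gam (Δ - 2) r) ^ 2
        ≤ gam (Δ - 1) r * gam Δ r + r * gam (Δ - 2) r * gam Δ r
            - r * (gam (Δ - 1) r) ^ 2 ∧
    1 ≤ (gam (Δ - 2) r) ^ 2 := by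
  obtain ⟨m, rfl⟩ : ∃ m, Δ = m + 4 := ⟨Δ - 4, by omega⟩
  have h2 : m + 4 - 2 = m + 2 := by omega
  have h1 : m + 4 - 1 = m + 3 := by omega
  rw [h1, h2]
  set a := gam (m + 2) r with ha
  set t := r ^ (m + 2) / (Nat.factorial (m + 2)) with htdef
  set s := r ^ (m + 3) / (Nat.factorial (m + 3)) with hsdef
  have hb : gam (m + 3) r = a + t := gam_succ (m + 2) r
  have hc : gam (m + 4) r = a + t + s := by
    have := gam_succ (m + 3) r
    rw [hb] at this; exact this
  have ht0 : 0 ≤ t := by positivity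
  have hs0 : 0 ≤ s := by positivity
  have ha1 : 1 ≤ a := gam_one_le (m + 2) (by omega) r hr0
  have hst : s ≤ t := by
    rw [htdef, hsdef]
    have hnum : r ^ (m + 3) ≤ 2 * r ^ (m + 2) := by
      calc r ^ (m + 3) = r * r ^ (m + 2) := by ring
        _ ≤ 2 * r ^ (m + 2) := by
            exact mul_le_mul_of_nonneg_right hr2 (pow_nonneg hr0 _)
    have hfac : ((Nat.factorial (m + 2) : ℝ)) * 2 ≤ (Nat.factorial (m + 3) : ℝ) := by
      have : Nat.factorial (m + 2) * 2 ≤ Nat.factorial (m + 3) := by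
        have : Nat.factorial (m + 3) = (m + 3) * Nat.factorial (m + 2) :=
          Nat.factorial_succ (m + 2)
        nlinarith [Nat.factorial_pos (m + 2)]
      exact_mod_cast this
    rw [div_le_div_iff₀ (by positivity) (by positivity)]
    calc r ^ (m + 3) * (Nat.factorial (m + 2) : ℝ)
        ≤ 2 * r ^ (m + 2) * (Nat.factorial (m + 2) : ℝ) := by
          exact mul_le_mul_of_nonneg_right hnum (by positivity)
      _ = r ^ (m + 2) * ((Nat.factorial (m + 2) : ℝ) * 2) := by ring
      _ ≤ r ^ (m + 2) * (Nat.factorial (m + 3) : ℝ) :=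
          mul_le_mul_of_nonneg_left hfac (pow_nonneg hr0 _)
  have ha0 : (0:ℝ) ≤ a := by linarith
  have hfac2 : (Nat.factorial (m + 2) : ℝ) = ((m:ℝ) + 2) * (Nat.factorial (m + 1)) := by
    have := Nat.factorial_succ (m + 1); push_cast [this]; ring
  have hfac3 : (Nat.factorial (m + 3) : ℝ) = ((m:ℝ) + 3) * (Nat.factorial (m + 2)) := by
    have := Nat.factorial_succ (m + 2); push_cast [this]; ring
  have hn : ((m:ℝ) + 3) * s = r * t := by
    rw [hsdef, htdef, hfac3]
    have h1 : (Nat.factorial (m + 2) : ℝ) ≠ 0 := by positivity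
    field_simp
    ring
  have hterm : r ^ (m + 1) / (Nat.factorial (m + 1)) ≤ a := by
    have hsplit : a = gam (m + 1) r + r ^ (m + 1) / (Nat.factorial (m + 1)) :=
      gam_succ (m + 1) r
    have h1 : (1:ℝ) ≤ gam (m + 1) r := gam_one_le (m + 1) (by omega) r hr0
    linarith
  have hra : t * ((m:ℝ) + 2) ≤ r * a := by
    have heq : t * ((m:ℝ) + 2) = r * (r ^ (m + 1) / (Nat.factorial (m + 1))) := by
      rw [htdef, hfac2]
      have h1 : (Nat.factorial (m + 1) : ℝ) ≠ 0 := by positivity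
      field_simp
      ring
    rw [heq]
    exact mul_le_mul_of_nonneg_left hterm hr0
  constructor
  · rw [hb, hc]
    rcases eq_or_lt_of_le hr0 with h0 | h0
    · have ht : t = 0 := by rw [htdef, ← h0]; simp
      have hs : s = 0 := by rw [hsdef, ← h0]; simp
      rw [ht, hs, ← h0]
      nlinarith
    · have hident : r * ((a + t) * (a + t + s) + r * a * (a + t + s)
          - r * (a + t) ^ 2 - a ^ 2)
          = (2 - r) * t * (r * a - t * ((m : ℝ) + 2))
            + (1 + r) * s * (r * a - t * ((m : ℝ) + 2))
            + (2 - r) * ((m : ℝ) + 2) * t ^ 2 + (2 * (m : ℝ) + 5) * (s * t)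
            + (1 - r) * (r * t - ((m : ℝ) + 3) * s) * t := by ring
      have hzero : r * t - ((m : ℝ) + 3) * s = 0 := by linarith [hn]
      have hrE : 0 ≤ r * ((a + t) * (a + t + s) + r * a * (a + t + s)
          - r * (a + t) ^ 2 - a ^ 2) := by
        rw [hident, hzero]
        have p1 : 0 ≤ (2 - r) * t * (r * a - t * ((m : ℝ) + 2)) :=
          mul_nonneg (mul_nonneg (by linarith) ht0) (by linarith)
        have p2 : 0 ≤ (1 + r) * s * (r * a - t * ((m : ℝ) + 2)) :=
          mul_nonneg (mul_nonneg (by linarith) hs0) (by linarith)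
        have p3 : 0 ≤ (2 - r) * ((m : ℝ) + 2) * t ^ 2 :=
          mul_nonneg (mul_nonneg (by linarith) (by positivity)) (sq_nonneg t)
        have p4 : 0 ≤ (2 * (m : ℝ) + 5) * (s * t) := by positivity
        linarith
      have hE := (mul_nonneg_iff_of_pos_left h0).1 hrE
      linarith
  · nlinarith
end
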